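/- Every Steiner triple system of order v with v > 3 has a 3-good sequencing. -/
import Mathlib


/-- A Steiner triple system on point set `points` with block set `blocks`:
every block is a 3-element subset of `points`, and every pair of distinct
points lies in exactly one block. -/
def IsSTS {α : Type*} [DecidableEq α] (points : Finset α) (blocks : Finset (Finset α)) : Prop :=
  (∀ b ∈ blocks, b ⊆ points ∧ b.card = 3) ∧
  (∀ x ∈ points, ∀ y ∈ points, x ≠ y → ∃! b, b ∈ blocks ∧ x ∈ b ∧ y ∈ b)

/-- An `ℓ`-good sequencing: a permutation (listing) of the points such that no
`ℓ` consecutive entries contain a block. -/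
def IsGoodSeq {α : Type*} [DecidableEq α] (points : Finset α) (blocks : Finset (Finset α))
    (ℓ : ℕ) (L : List α) : Prop :=
  L.Nodup ∧ L.toFinset = points ∧
  ∀ i : ℕ, ∀ b ∈ blocks, ¬ b ⊆ ((L.drop i).take ℓ).toFinset

/-- A cyclic `ℓ`-good sequencing: a permutation (listing) of the points such that no
`ℓ` cyclically consecutive entries contain a block. -/
def IsCyclicGoodSeq {α : Type*} [DecidableEq α] (points : Finset α) (blocks : Finset (Finset α))
    (ℓ : ℕ) (L : List α) : Prop :=
  L.Nodup ∧ L.toFinset = points ∧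
  ∀ i : ℕ, ∀ b ∈ blocks, ¬ b ⊆ (((L ++ L).drop i).take ℓ).toFinset

/-- An independent set: a set of points containing no block. -/
def IsIndep {α : Type*} [DecidableEq α] (blocks : Finset (Finset α)) (I : Finset α) : Prop :=
  ∀ b ∈ blocks, ¬ b ⊆ I

/-- A (proper) colouring with colour set `Fin k`: no block is monochromatic,
i.e. every colour class is an independent set. -/
def IsColouring {α : Type*} [DecidableEq α] (blocks : Finset (Finset α)) {k : ℕ}
    (χ : α → Fin k) : Prop :=
  ∀ b ∈ blocks, ∃ x ∈ b, ∃ y ∈ b, χ x ≠ χ y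

/-- A colouring with three explicitly given colour classes `A`, `B`, `C`:
they partition the point set and each is independent. -/
def IsColouring3 {α : Type*} [DecidableEq α] (points : Finset α) (blocks : Finset (Finset α))
    (A B C : Finset α) : Prop :=
  A ∪ B ∪ C = points ∧ Disjoint A B ∧ Disjoint A C ∧ Disjoint B C ∧
  IsIndep blocks A ∧ IsIndep blocks B ∧ IsIndep blocks C

section aux
variable {α : Type*} [DecidableEq α]

def NoBlk (blocks : Finset (Finset α)) (L : List α) : Prop :=
  ∀ i : ℕ, ∀ b ∈ blocks, ¬ b ⊆ ((L.drop i).take 3).toFinset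

lemma noblk_tail {blocks : Finset (Finset α)} (hc : ∀ b ∈ blocks, b.card = 3)
    (L : List α) (i : ℕ) (h : L.length ≤ i + 2) :
    ∀ b ∈ blocks, ¬ b ⊆ ((L.drop i).take 3).toFinset := by
  intro b hb hsub
  have h1 : ((L.drop i).take 3).length ≤ 2 := by
    simp [List.length_take, List.length_drop]
    omega
  have h2 := List.toFinset_card_le ((L.drop i).take 3)
  have h3 := Finset.card_le_card hsub
  rw [hc b hb] at h3
  omega

lemma noblk_short {blocks : Finset (Finset α)} (hc : ∀ b ∈ blocks, b.card = 3)
    (L : List α) (h : L.length ≤ 2) : NoBlk blocks L :=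
  fun i => noblk_tail hc L i (by omega)

lemma noblk_cons {blocks : Finset (Finset α)} (u : α) (M : List α)
    (h0 : ∀ b ∈ blocks, ¬ b ⊆ (u :: M.take 2).toFinset)
    (hM : NoBlk blocks M) : NoBlk blocks (u :: M) := by
  intro i b hb
  match i with
  | 0 => simpa using h0 b hb
  | (j+1) => simpa using hM j b hb

lemma not_subset_triple {b : Finset α} (hc : b.card = 3) (p q r : α)
    (h : ¬ (p ∈ b ∧ q ∈ b ∧ r ∈ b)) : ¬ b ⊆ ({p, q, r} : Finset α) := by
  intro hsub
  have h3 : ({p, q, r} : Finset α).card ≤ 3 := by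
    apply le_trans (Finset.card_insert_le _ _)
    have h4 : (insert q {r} : Finset α).card ≤ 2 := by
      apply le_trans (Finset.card_insert_le _ _)
      simp
    omega
  have hb' : b = {p, q, r} := Finset.eq_of_subset_of_card_le hsub (by omega)
  exact h ⟨by rw [hb']; simp, by rw [hb']; simp, by rw [hb']; simp⟩

lemma block_unique {points : Finset α} {blocks : Finset (Finset α)}
    (hS : IsSTS points blocks) {p q : α} (hp : p ∈ points) (hq : q ∈ points) (hpq : p ≠ q)
    {b1 b2 : Finset α} (h1 : b1 ∈ blocks) (h2 : b2 ∈ blocks)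
    (hp1 : p ∈ b1) (hq1 : q ∈ b1) (hp2 : p ∈ b2) (hq2 : q ∈ b2) : b1 = b2 := by
  obtain ⟨b0, _, hu⟩ := hS.2 p hp q hq hpq
  rw [hu b1 ⟨h1, hp1, hq1⟩, hu b2 ⟨h2, hp2, hq2⟩]

lemma third_unique {points : Finset α} {blocks : Finset (Finset α)}
    (hS : IsSTS points blocks) {u w : α} (hu : u ∈ points) (hw : w ∈ points) (huw : u ≠ w)
    {x y : α} (hxu : x ≠ u) (hxw : x ≠ w) (hyu : y ≠ u) (hyw : y ≠ w)
    (hx : ∃ b ∈ blocks, u ∈ b ∧ w ∈ b ∧ x ∈ b)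
    (hy : ∃ b ∈ blocks, u ∈ b ∧ w ∈ b ∧ y ∈ b) : x = y := by
  obtain ⟨b1, hb1, hu1, hw1, hx1⟩ := hx
  obtain ⟨b2, hb2, hu2, hw2, hy2⟩ := hy
  have he : b1 = b2 := block_unique hS hu hw huw hb1 hb2 hu1 hw1 hu2 hw2
  subst he
  by_contra hxy
  have hcard : ({u, w, x, y} : Finset α).card = 4 := by
    rw [Finset.card_insert_of_notMem (by simp [huw, hxu.symm, hyu.symm]),
        Finset.card_insert_of_notMem (by simp [hxw.symm, hyw.symm]),
        Finset.card_insert_of_notMem (by simp [hxy]), Finset.card_singleton]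
  have hsub : ({u, w, x, y} : Finset α) ⊆ b1 := by
    intro z hz
    simp only [Finset.mem_insert, Finset.mem_singleton] at hz
    rcases hz with rfl | rfl | rfl | rfl <;> assumption
  have hle := Finset.card_le_card hsub
  rw [(hS.1 b1 hb1).2, hcard] at hle
  omega

lemma choose1 {R : Finset α} (h2 : 2 ≤ R.card) (P : α → Prop)
    (h : ∀ x ∈ R, ∀ y ∈ R, P x → P y → x = y) : ∃ x ∈ R, ¬ P x := by
  by_contra hc
  push_neg at hc
  obtain ⟨x, y, hx, hy, hxy⟩ := Finset.one_lt_card_iff.mp (show 1 < R.card by omega)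
  exact hxy (h x hx y hy (hc x hx) (hc y hy))

lemma choose2 {R : Finset α} (h3 : 3 ≤ R.card) (P1 P2 : α → Prop)
    (h1 : ∀ x ∈ R, ∀ y ∈ R, P1 x → P1 y → x = y)
    (h2 : ∀ x ∈ R, ∀ y ∈ R, P2 x → P2 y → x = y) :
    ∃ x ∈ R, ¬ P1 x ∧ ¬ P2 x := by
  by_contra hcon
  push_neg at hcon
  have key : ∀ x ∈ R, P1 x ∨ P2 x := by
    intro x hx
    by_cases h : P1 x
    · exact Or.inl h
    · exact Or.inr (hcon x hx h)
  obtain ⟨a, b, c, ha, hb, hc', hab, hac, hbc⟩ := Finset.two_lt_card_iff.mp (show 2 < R.card by omega)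
  rcases key a ha with pa | pa <;> rcases key b hb with pb | pb <;> rcases key c hc' with pc | pc
  · exact hab (h1 a ha b hb pa pb)
  · exact hab (h1 a ha b hb pa pb)
  · exact hac (h1 a ha c hc' pa pc)
  · exact hbc (h2 b hb c hc' pb pc)
  · exact hbc (h1 b hb c hc' pb pc)
  · exact hac (h2 a ha c hc' pa pc)
  · exact hab (h2 a ha b hb pa pb)
  · exact hab (h2 a ha b hb pa pb)

lemma erase_block_unique {points : Finset α} {blocks : Finset (Finset α)}
    (hS : IsSTS points blocks) {R : Finset α} (hR : R ⊆ points) :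
    ∀ x ∈ R, ∀ y ∈ R, (R.erase x ∈ blocks ∧ R.card = 4) →
      (R.erase y ∈ blocks ∧ R.card = 4) → x = y := by
  rintro x hx y hy ⟨hbx, h4⟩ ⟨hby, -⟩
  by_contra hxy
  have hyx : y ∈ R.erase x := Finset.mem_erase.mpr ⟨Ne.symm hxy, hy⟩
  have hS2 : 1 < ((R.erase x).erase y).card := by
    rw [Finset.card_erase_of_mem hyx, Finset.card_erase_of_mem hx, h4]
    omega
  obtain ⟨p, q, hp, hq, hpq⟩ := Finset.one_lt_card_iff.mp hS2
  have hpex : p ∈ R.erase x := Finset.mem_of_mem_erase hp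
  have hqex : q ∈ R.erase x := Finset.mem_of_mem_erase hq
  have hpR : p ∈ R := Finset.mem_of_mem_erase hpex
  have hqR : q ∈ R := Finset.mem_of_mem_erase hqex
  have hpey : p ∈ R.erase y := Finset.mem_erase.mpr ⟨(Finset.mem_erase.mp hp).1, hpR⟩
  have hqey : q ∈ R.erase y := Finset.mem_erase.mpr ⟨(Finset.mem_erase.mp hq).1, hqR⟩
  have heq := block_unique hS (hR hpR) (hR hqR) hpq hbx hby hpex hqex hpey hqey
  have : y ∈ R.erase y := heq ▸ hyx
  exact (Finset.mem_erase.mp this).1 rfl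

end aux

section key
variable {α : Type*} [DecidableEq α]

set_option maxHeartbeats 1000000 in
lemma base3 {points : Finset α} {blocks : Finset (Finset α)} (hS : IsSTS points blocks)
    {R : Finset α} (hcard : R.card = 3) (h3 : R ∉ blocks)
    {a b : α} (haR : a ∈ R) (hbR : b ∈ R.erase a) :
    ∃ c, R = {a, b, c} ∧ c ∈ R ∧ c ≠ a ∧ c ≠ b ∧
      (∀ blk ∈ blocks, ¬ blk ⊆ ({a, b, c} : Finset α)) := by
  have hc3 : ∀ blk ∈ blocks, blk.card = 3 := fun blk hblk => (hS.1 blk hblk).2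
  have hbc : ((R.erase a).erase b).card = 1 := by
    rw [Finset.card_erase_of_mem hbR, Finset.card_erase_of_mem haR, hcard]
  obtain ⟨c, hc⟩ := Finset.card_eq_one.mp hbc
  have hcR' : c ∈ (R.erase a).erase b := by rw [hc]; exact Finset.mem_singleton_self c
  have hcb : c ≠ b := (Finset.mem_erase.mp hcR').1
  have hca : c ≠ a := (Finset.mem_erase.mp (Finset.mem_of_mem_erase hcR')).1
  have hcR : c ∈ R := Finset.mem_of_mem_erase (Finset.mem_of_mem_erase hcR')
  have hRabc : R = {a, b, c} := by
    rw [← Finset.insert_erase haR, ← Finset.insert_erase hbR, hc]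
  refine ⟨c, hRabc, hcR, hca, hcb, ?_⟩
  intro blk hblk hsub
  rw [← hRabc] at hsub
  have := Finset.eq_of_subset_of_card_le hsub (by rw [hc3 blk hblk, hcard])
  exact h3 (this ▸ hblk)

set_option maxHeartbeats 1000000 in
lemma key_lemma {points : Finset α} {blocks : Finset (Finset α)} (hS : IsSTS points blocks) :
    ∀ n : ℕ, 3 ≤ n → ∀ R : Finset α, R.card = n → R ⊆ points →
    ∀ t : List α, t.length ≤ 2 → t.Nodup → (∀ x ∈ t, x ∈ points) → (∀ x ∈ t, x ∉ R) →
    (R ∉ blocks) →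
    ∃ L : List α, L.Nodup ∧ L.toFinset = R ∧ NoBlk blocks (t ++ L) := by
  intro n
  induction n using Nat.strong_induction_on with
  | _ n ih =>
  intro hn R hcard hRp t htlen htnd htp htR h3
  have hc3 : ∀ b ∈ blocks, b.card = 3 := fun b hb => (hS.1 b hb).2
  by_cases hn3 : n = 3
  · -- BASE CASE : |R| = 3
    subst hn3
    rcases t with _ | ⟨u, _ | ⟨w, rest⟩⟩
    · -- t = []
      obtain ⟨a, haR⟩ := Finset.card_pos.mp (show 0 < R.card by omega)
      obtain ⟨b, hbR⟩ := Finset.card_pos.mp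
        (show 0 < (R.erase a).card by rw [Finset.card_erase_of_mem haR, hcard]; omega)
      obtain ⟨c, hRabc, hcR, hca, hcb, hABC⟩ := base3 hS hcard h3 haR hbR
      have hba : b ≠ a := (Finset.mem_erase.mp hbR).1
      refine ⟨[a, b, c], by simp [Ne, hba.symm, hca.symm, hcb.symm],
        by rw [hRabc]; simp, ?_⟩
      show NoBlk blocks (a :: [b, c])
      apply noblk_cons
      · intro blk hblk
        have hwin : (a :: List.take 2 [b, c]).toFinset = ({a, b, c} : Finset α) := by simp
        rw [hwin]; exact hABC blk hblk
      · exact noblk_short hc3 _ (by simp)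
    · -- t = [u]   (u is the last element of the prefix)
      have huP : u ∈ points := htp u (by simp)
      have huR : u ∉ R := htR u (by simp)
      obtain ⟨a, haR⟩ := Finset.card_pos.mp (show 0 < R.card by omega)
      have haP : a ∈ points := hRp haR
      have hua : u ≠ a := fun h => huR (h ▸ haR)
      have hcer : 2 ≤ (R.erase a).card := by
        rw [Finset.card_erase_of_mem haR, hcard]
      obtain ⟨b, hbR, hokb⟩ := choose1 hcer
        (fun x => ∃ blk ∈ blocks, u ∈ blk ∧ a ∈ blk ∧ x ∈ blk)
        (by
          intro x hx y hy px py
          have hxR := Finset.mem_of_mem_erase hx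
          have hyR := Finset.mem_of_mem_erase hy
          exact third_unique hS huP haP hua
            (fun h => huR (h ▸ hxR)) ((Finset.mem_erase.mp hx).1)
            (fun h => huR (h ▸ hyR)) ((Finset.mem_erase.mp hy).1) px py)
      obtain ⟨c, hRabc, hcR, hca, hcb, hABC⟩ := base3 hS hcard h3 haR hbR
      have hba : b ≠ a := (Finset.mem_erase.mp hbR).1
      refine ⟨[a, b, c], by simp [Ne, hba.symm, hca.symm, hcb.symm],
        by rw [hRabc]; simp, ?_⟩
      show NoBlk blocks (u :: [a, b, c])
      apply noblk_cons
      · intro blk hblk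
        have hwin : (u :: List.take 2 [a, b, c]).toFinset = ({u, a, b} : Finset α) := by simp
        rw [hwin]
        exact not_subset_triple (hc3 blk hblk) u a b
          (fun hh => hokb ⟨blk, hblk, hh.1, hh.2.1, hh.2.2⟩)
      show NoBlk blocks (a :: [b, c])
      apply noblk_cons
      · intro blk hblk
        have hwin : (a :: List.take 2 [b, c]).toFinset = ({a, b, c} : Finset α) := by simp
        rw [hwin]; exact hABC blk hblk
      · exact noblk_short hc3 _ (by simp)
    · -- t = u :: w :: rest ; rest must be []
      rcases rest with _ | ⟨z, rest'⟩
      swap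
      · simp at htlen
      have huP : u ∈ points := htp u (by simp)
      have hwP : w ∈ points := htp w (by simp)
      have huR : u ∉ R := htR u (by simp)
      have hwR : w ∉ R := htR w (by simp)
      have huw : u ≠ w := by simpa using htnd
      obtain ⟨a, haR, hoka⟩ := choose1 (show 2 ≤ R.card by omega)
        (fun x => ∃ blk ∈ blocks, u ∈ blk ∧ w ∈ blk ∧ x ∈ blk)
        (by
          intro x hx y hy px py
          exact third_unique hS huP hwP huw
            (fun h => huR (h ▸ hx)) (fun h => hwR (h ▸ hx))
            (fun h => huR (h ▸ hy)) (fun h => hwR (h ▸ hy)) px py)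
      have haP : a ∈ points := hRp haR
      have hwa : w ≠ a := fun h => hwR (h ▸ haR)
      have hcer : 2 ≤ (R.erase a).card := by
        rw [Finset.card_erase_of_mem haR, hcard]
      obtain ⟨b, hbR, hokb⟩ := choose1 hcer
        (fun x => ∃ blk ∈ blocks, w ∈ blk ∧ a ∈ blk ∧ x ∈ blk)
        (by
          intro x hx y hy px py
          have hxR := Finset.mem_of_mem_erase hx
          have hyR := Finset.mem_of_mem_erase hy
          exact third_unique hS hwP haP hwa
            (fun h => hwR (h ▸ hxR)) ((Finset.mem_erase.mp hx).1)
            (fun h => hwR (h ▸ hyR)) ((Finset.mem_erase.mp hy).1) px py)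
      obtain ⟨c, hRabc, hcR, hca, hcb, hABC⟩ := base3 hS hcard h3 haR hbR
      have hba : b ≠ a := (Finset.mem_erase.mp hbR).1
      refine ⟨[a, b, c], by simp [Ne, hba.symm, hca.symm, hcb.symm],
        by rw [hRabc]; simp, ?_⟩
      show NoBlk blocks (u :: (w :: [a, b, c]))
      apply noblk_cons
      · intro blk hblk
        have hwin : (u :: List.take 2 (w :: [a, b, c])).toFinset = ({u, w, a} : Finset α) := by
          simp
        rw [hwin]
        exact not_subset_triple (hc3 blk hblk) u w a
          (fun hh => hoka ⟨blk, hblk, hh.1, hh.2.1, hh.2.2⟩)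
      show NoBlk blocks (w :: [a, b, c])
      apply noblk_cons
      · intro blk hblk
        have hwin : (w :: List.take 2 [a, b, c]).toFinset = ({w, a, b} : Finset α) := by simp
        rw [hwin]
        exact not_subset_triple (hc3 blk hblk) w a b
          (fun hh => hokb ⟨blk, hblk, hh.1, hh.2.1, hh.2.2⟩)
      show NoBlk blocks (a :: [b, c])
      apply noblk_cons
      · intro blk hblk
        have hwin : (a :: List.take 2 [b, c]).toFinset = ({a, b, c} : Finset α) := by simp
        rw [hwin]; exact hABC blk hblk
      · exact noblk_short hc3 _ (by simp)
  · -- STEP CASE : n ≥ 4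
    have hn4 : 4 ≤ n := by omega
    have hP2u := erase_block_unique hS hRp
    rcases t with _ | ⟨u, _ | ⟨w, rest⟩⟩
    · -- t = []
      obtain ⟨x, hxR, hnP2⟩ := choose1 (show 2 ≤ R.card by omega)
        (fun x => R.erase x ∈ blocks ∧ R.card = 4) hP2u
      have hxP : x ∈ points := hRp hxR
      have hcard' : (R.erase x).card = n - 1 := by
        rw [Finset.card_erase_of_mem hxR, hcard]
      have h3' : R.erase x ∉ blocks := by
        intro hmem
        have := hc3 _ hmem
        exact hnP2 ⟨hmem, by omega⟩
      obtain ⟨L', hnd', htf', hNB'⟩ := ih (n - 1) (by omega) (by omega) (R.erase x) hcard'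
        ((Finset.erase_subset x R).trans hRp) [x] (by simp) (by simp)
        (by simpa using hxP) (by simp) h3'
      have hxL' : x ∉ L' := fun h => by
        have : x ∈ R.erase x := htf' ▸ List.mem_toFinset.mpr h
        simp at this
      refine ⟨x :: L', List.nodup_cons.mpr ⟨hxL', hnd'⟩, ?_, ?_⟩
      · rw [List.toFinset_cons, htf', Finset.insert_erase hxR]
      · exact hNB'
    · -- t = [u]
      obtain ⟨x, hxR, hnP2⟩ := choose1 (show 2 ≤ R.card by omega)
        (fun x => R.erase x ∈ blocks ∧ R.card = 4) hP2u
      have hxP : x ∈ points := hRp hxR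
      have huP : u ∈ points := htp u (by simp)
      have huR : u ∉ R := htR u (by simp)
      have hux : u ≠ x := fun h => huR (h ▸ hxR)
      have hcard' : (R.erase x).card = n - 1 := by
        rw [Finset.card_erase_of_mem hxR, hcard]
      have h3' : R.erase x ∉ blocks := by
        intro hmem
        have := hc3 _ hmem
        exact hnP2 ⟨hmem, by omega⟩
      obtain ⟨L', hnd', htf', hNB'⟩ := ih (n - 1) (by omega) (by omega) (R.erase x) hcard'
        ((Finset.erase_subset x R).trans hRp) [u, x] (by simp) (by simp [hux])
        (by intro z hz; simp at hz; rcases hz with rfl | rfl; exacts [huP, hxP])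
        (by intro z hz; simp at hz; rcases hz with rfl | rfl
            · exact fun h => huR (Finset.mem_of_mem_erase h)
            · simp) h3'
      have hxL' : x ∉ L' := fun h => by
        have : x ∈ R.erase x := htf' ▸ List.mem_toFinset.mpr h
        simp at this
      refine ⟨x :: L', List.nodup_cons.mpr ⟨hxL', hnd'⟩, ?_, ?_⟩
      · rw [List.toFinset_cons, htf', Finset.insert_erase hxR]
      · exact hNB'
    · -- t = u :: w :: rest, rest = []
      rcases rest with _ | ⟨z, rest'⟩
      swap
      · simp at htlen
      have huP : u ∈ points := htp u (by simp)
      have hwP : w ∈ points := htp w (by simp)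
      have huR : u ∉ R := htR u (by simp)
      have hwR : w ∉ R := htR w (by simp)
      have huw : u ≠ w := by simpa using htnd
      obtain ⟨x, hxR, hnP1, hnP2⟩ := choose2 (show 3 ≤ R.card by omega)
        (fun x => ∃ blk ∈ blocks, u ∈ blk ∧ w ∈ blk ∧ x ∈ blk)
        (fun x => R.erase x ∈ blocks ∧ R.card = 4)
        (by
          intro x hx y hy px py
          exact third_unique hS huP hwP huw
            (fun h => huR (h ▸ hx)) (fun h => hwR (h ▸ hx))
            (fun h => huR (h ▸ hy)) (fun h => hwR (h ▸ hy)) px py)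
        hP2u
      have hxP : x ∈ points := hRp hxR
      have hwx : w ≠ x := fun h => hwR (h ▸ hxR)
      have hcard' : (R.erase x).card = n - 1 := by
        rw [Finset.card_erase_of_mem hxR, hcard]
      have h3' : R.erase x ∉ blocks := by
        intro hmem
        have := hc3 _ hmem
        exact hnP2 ⟨hmem, by omega⟩
      obtain ⟨L', hnd', htf', hNB'⟩ := ih (n - 1) (by omega) (by omega) (R.erase x) hcard'
        ((Finset.erase_subset x R).trans hRp) [w, x] (by simp) (by simp [hwx])
        (by intro z hz; simp at hz; rcases hz with rfl | rfl; exacts [hwP, hxP])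
        (by intro z hz; simp at hz; rcases hz with rfl | rfl
            · exact fun h => hwR (Finset.mem_of_mem_erase h)
            · simp) h3'
      have hxL' : x ∉ L' := fun h => by
        have : x ∈ R.erase x := htf' ▸ List.mem_toFinset.mpr h
        simp at this
      refine ⟨x :: L', List.nodup_cons.mpr ⟨hxL', hnd'⟩, ?_, ?_⟩
      · rw [List.toFinset_cons, htf', Finset.insert_erase hxR]
      · show NoBlk blocks (u :: ([w, x] ++ L'))
        apply noblk_cons
        · intro blk hblk
          have hwin : (u :: List.take 2 ([w, x] ++ L')).toFinset = ({u, w, x} : Finset α) := by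
            simp
          rw [hwin]
          exact not_subset_triple (hc3 blk hblk) u w x
            (fun hh => hnP1 ⟨blk, hblk, hh.1, hh.2.1, hh.2.2⟩)
        · exact hNB'

end key

theorem stmt3 {α : Type*} [DecidableEq α] (points : Finset α) (blocks : Finset (Finset α))
    (hS : IsSTS points blocks) (hv : 3 < points.card) :
    ∃ L : List α, IsGoodSeq points blocks 3 L := by
  have h3 : points ∉ blocks := fun h => by
    have := (hS.1 points h).2
    omega
  obtain ⟨L, hnd, htf, hNB⟩ := key_lemma hS points.card (by omega) points rfl
    (le_refl _) [] (by simp) (by simp) (by simp) (by simp) h3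
  exact ⟨L, hnd, htf, hNB⟩
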